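/- For real numbers q₁ ≠ q₂ and a fixed real parameter w, define the M₂(ℝ)⊗M₂(ℝ)-valued function a(q₁,q₂) = (1/(2(q₁−q₂)))·(−w·e₁₁⊗e₂₂ + e₁₂⊗e₂₁ − e₂₁⊗e₁₂ + w·e₂₂⊗e₁₁). For 1 ≤ j < k ≤ 3 let a_{jk} denote the operator on (ℝ²)^{⊗3} acting as a(q₁,q₂) on tensor factors j and k and as the identity on the remaining factor, and set a_{kj} = −a_{jk} (which agrees with conjugating a_{jk} by the flip of factors j and k, since a is antisymmetric under the flip). For k ∈ {1,2,3} and any differentiable matrix-valued function r of (q₁,q₂), define h_k∂r = (e₁₁ acting on factor k)·∂r/∂q₁ + (e₂₂ acting on factor k)·∂r/∂q₂. Then on the domain q₁ ≠ q₂: [a₁₂, a₁₃] + [a₁₂, a₂₃] + [a₃₂, a₁₃] + (1/2)·( h₃∂a₁₂ + h₁∂a₂₃ + h₂∂a₃₁ ) = 0. -/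

import Mathlib

open Matrix Kronecker

noncomputable section

/-- `2×2` real matrices. -/
abbrev M2 : Type := Matrix (Fin 2) (Fin 2) ℝ

/-- `M₂(ℝ) ⊗ M₂(ℝ)` realized via the Kronecker product. -/
abbrev M4 : Type := Matrix (Fin 2 × Fin 2) (Fin 2 × Fin 2) ℝ

/-- Operators on `(ℝ²)^{⊗3}`, realized as matrices indexed by triples. -/
abbrev M8 : Type := Matrix (Fin 2 × Fin 2 × Fin 2) (Fin 2 × Fin 2 × Fin 2) ℝ

/-- The `2×2` elementary matrix `e_{ij}` (indices `0,1` for `1,2`). -/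
def E (i j : Fin 2) : M2 := Matrix.single i j 1

/-- The dynamical `a`-matrix of the second Poisson structure of the `N = 2`
rational Calogero–Moser model, with gauge parameter `w`:
`a(q₁,q₂) = (1/(2(q₁−q₂)))·(−w e₁₁⊗e₂₂ + e₁₂⊗e₂₁ − e₂₁⊗e₁₂ + w e₂₂⊗e₁₁)`. -/
def aMat (w q₁ q₂ : ℝ) : M4 :=
  (1 / (2 * (q₁ - q₂))) •
    (-(w • (E 0 0 ⊗ₖ E 1 1)) + E 0 1 ⊗ₖ E 1 0 - E 1 0 ⊗ₖ E 0 1 + w • (E 1 1 ⊗ₖ E 0 0))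

/-- Place a matrix of `M₂(ℝ)⊗M₂(ℝ)` on tensor factors 1 and 2 of `(ℝ²)^{⊗3}`,
acting as identity on factor 3. -/
def place12 (r : M4) : M8 :=
  Matrix.of fun i j => r (i.1, i.2.1) (j.1, j.2.1) * (if i.2.2 = j.2.2 then 1 else 0)

/-- Place a matrix of `M₂(ℝ)⊗M₂(ℝ)` on tensor factors 1 and 3 of `(ℝ²)^{⊗3}`,
acting as identity on factor 2. -/
def place13 (r : M4) : M8 :=
  Matrix.of fun i j => r (i.1, i.2.2) (j.1, j.2.2) * (if i.2.1 = j.2.1 then 1 else 0)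

/-- Place a matrix of `M₂(ℝ)⊗M₂(ℝ)` on tensor factors 2 and 3 of `(ℝ²)^{⊗3}`,
acting as identity on factor 1. -/
def place23 (r : M4) : M8 :=
  Matrix.of fun i j => r (i.2.1, i.2.2) (j.2.1, j.2.2) * (if i.1 = j.1 then 1 else 0)

/-- A `2×2` matrix acting on tensor factor 1 of `(ℝ²)^{⊗3}`. -/
def fac1 (m : M2) : M8 :=
  Matrix.of fun i j => m i.1 j.1 * (if i.2 = j.2 then 1 else 0)

/-- A `2×2` matrix acting on tensor factor 2 of `(ℝ²)^{⊗3}`. -/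
def fac2 (m : M2) : M8 :=
  Matrix.of fun i j => m i.2.1 j.2.1 * (if (i.1, i.2.2) = (j.1, j.2.2) then 1 else 0)

/-- A `2×2` matrix acting on tensor factor 3 of `(ℝ²)^{⊗3}`. -/
def fac3 (m : M2) : M8 :=
  Matrix.of fun i j => m i.2.2 j.2.2 * (if (i.1, i.2.1) = (j.1, j.2.1) then 1 else 0)

/-- Entrywise partial derivative in the first variable `q₁`. -/
def pd1 (f : ℝ → ℝ → M8) (q₁ q₂ : ℝ) : M8 :=
  Matrix.of fun i j => deriv (fun t => f t q₂ i j) q₁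

/-- Entrywise partial derivative in the second variable `q₂`. -/
def pd2 (f : ℝ → ℝ → M8) (q₁ q₂ : ℝ) : M8 :=
  Matrix.of fun i j => deriv (fun t => f q₁ t i j) q₂

/-- `h₁∂r = (e₁₁ on factor 1)·∂r/∂q₁ + (e₂₂ on factor 1)·∂r/∂q₂`. -/
def hd1 (f : ℝ → ℝ → M8) (q₁ q₂ : ℝ) : M8 :=
  fac1 (E 0 0) * pd1 f q₁ q₂ + fac1 (E 1 1) * pd2 f q₁ q₂

/-- `h₂∂r = (e₁₁ on factor 2)·∂r/∂q₁ + (e₂₂ on factor 2)·∂r/∂q₂`. -/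
def hd2 (f : ℝ → ℝ → M8) (q₁ q₂ : ℝ) : M8 :=
  fac2 (E 0 0) * pd1 f q₁ q₂ + fac2 (E 1 1) * pd2 f q₁ q₂

/-- `h₃∂r = (e₁₁ on factor 3)·∂r/∂q₁ + (e₂₂ on factor 3)·∂r/∂q₂`. -/
def hd3 (f : ℝ → ℝ → M8) (q₁ q₂ : ℝ) : M8 :=
  fac3 (E 0 0) * pd1 f q₁ q₂ + fac3 (E 1 1) * pd2 f q₁ q₂

/-- `a₁₂` as a function of the dynamical variables. -/
def a12 (w : ℝ) : ℝ → ℝ → M8 := fun q₁ q₂ => place12 (aMat w q₁ q₂)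

/-- `a₁₃` as a function of the dynamical variables. -/
def a13 (w : ℝ) : ℝ → ℝ → M8 := fun q₁ q₂ => place13 (aMat w q₁ q₂)

/-- `a₂₃` as a function of the dynamical variables. -/
def a23 (w : ℝ) : ℝ → ℝ → M8 := fun q₁ q₂ => place23 (aMat w q₁ q₂)

/-- `a₃₂ = −a₂₃`. -/
def a32 (w : ℝ) : ℝ → ℝ → M8 := fun q₁ q₂ => -a23 w q₁ q₂

/-- `a₃₁ = −a₁₃`. -/
def a31 (w : ℝ) : ℝ → ℝ → M8 := fun q₁ q₂ => -a13 w q₁ q₂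

namespace Stmt9Aux

/-! ### Integer-level combinatorics -/

abbrev Z4 : Type := Matrix (Fin 2 × Fin 2) (Fin 2 × Fin 2) ℤ
abbrev Z8 : Type := Matrix (Fin 2 × Fin 2 × Fin 2) (Fin 2 × Fin 2 × Fin 2) ℤ

def EZ (i j : Fin 2) : Matrix (Fin 2) (Fin 2) ℤ := Matrix.single i j 1

def DZ : Z4 := -(EZ 0 0 ⊗ₖ EZ 1 1) + EZ 1 1 ⊗ₖ EZ 0 0
def KZ : Z4 := EZ 0 1 ⊗ₖ EZ 1 0 - EZ 1 0 ⊗ₖ EZ 0 1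

def zp12 (r : Z4) : Z8 :=
  Matrix.of fun i j => r (i.1, i.2.1) (j.1, j.2.1) * (if i.2.2 = j.2.2 then 1 else 0)
def zp13 (r : Z4) : Z8 :=
  Matrix.of fun i j => r (i.1, i.2.2) (j.1, j.2.2) * (if i.2.1 = j.2.1 then 1 else 0)
def zp23 (r : Z4) : Z8 :=
  Matrix.of fun i j => r (i.2.1, i.2.2) (j.2.1, j.2.2) * (if i.1 = j.1 then 1 else 0)
def zf1 (m : Matrix (Fin 2) (Fin 2) ℤ) : Z8 :=
  Matrix.of fun i j => m i.1 j.1 * (if i.2 = j.2 then 1 else 0)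
def zf2 (m : Matrix (Fin 2) (Fin 2) ℤ) : Z8 :=
  Matrix.of fun i j => m i.2.1 j.2.1 * (if (i.1, i.2.2) = (j.1, j.2.2) then 1 else 0)
def zf3 (m : Matrix (Fin 2) (Fin 2) ℤ) : Z8 :=
  Matrix.of fun i j => m i.2.2 j.2.2 * (if (i.1, i.2.1) = (j.1, j.2.1) then 1 else 0)

lemma ZA_zero :
    zp12 DZ * zp13 DZ - zp13 DZ * zp12 DZ
    + (zp12 DZ * zp23 DZ - zp23 DZ * zp12 DZ)
    - (zp23 DZ * zp13 DZ - zp13 DZ * zp23 DZ) = 0 := by decide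

lemma ZB_zero :
    zp12 DZ * zp13 KZ - zp13 KZ * zp12 DZ
    + (zp12 KZ * zp13 DZ - zp13 DZ * zp12 KZ)
    + (zp12 DZ * zp23 KZ - zp23 KZ * zp12 DZ)
    + (zp12 KZ * zp23 DZ - zp23 DZ * zp12 KZ)
    - (zp23 DZ * zp13 KZ - zp13 KZ * zp23 DZ)
    - (zp23 KZ * zp13 DZ - zp13 DZ * zp23 KZ)
    + (zf3 (EZ 1 1) * zp12 DZ - zf3 (EZ 0 0) * zp12 DZ)
    + (zf1 (EZ 1 1) * zp23 DZ - zf1 (EZ 0 0) * zp23 DZ)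
    + (zf2 (EZ 0 0) * zp13 DZ - zf2 (EZ 1 1) * zp13 DZ) = 0 := by decide

lemma ZC_zero :
    zp12 KZ * zp13 KZ - zp13 KZ * zp12 KZ
    + (zp12 KZ * zp23 KZ - zp23 KZ * zp12 KZ)
    - (zp23 KZ * zp13 KZ - zp13 KZ * zp23 KZ)
    + (zf3 (EZ 1 1) * zp12 KZ - zf3 (EZ 0 0) * zp12 KZ)
    + (zf1 (EZ 1 1) * zp23 KZ - zf1 (EZ 0 0) * zp23 KZ)
    + (zf2 (EZ 0 0) * zp13 KZ - zf2 (EZ 1 1) * zp13 KZ) = 0 := by decide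

/-! ### Real-side atoms and cast lemmas -/

def Dr : M4 := -(E 0 0 ⊗ₖ E 1 1) + E 1 1 ⊗ₖ E 0 0
def Kr : M4 := E 0 1 ⊗ₖ E 1 0 - E 1 0 ⊗ₖ E 0 1

def D12 : M8 := place12 Dr
def D13 : M8 := place13 Dr
def D23 : M8 := place23 Dr
def K12 : M8 := place12 Kr
def K13 : M8 := place13 Kr
def K23 : M8 := place23 Kr

def φ : Z8 →+* M8 := (Int.castRingHom ℝ).mapMatrix

lemma phi_apply (X : Z8) : φ X = X.map (Int.cast : ℤ → ℝ) := rfl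

lemma castE (i j : Fin 2) : (EZ i j).map (Int.cast : ℤ → ℝ) = E i j := by
  ext a b
  simp [EZ, E, Matrix.single, Matrix.map_apply, apply_ite (Int.cast : ℤ → ℝ)]

lemma castD : DZ.map (Int.cast : ℤ → ℝ) = Dr := by
  ext a b
  simp only [DZ, Dr, Matrix.map_apply, Matrix.add_apply, Matrix.neg_apply, kroneckerMap_apply,
    EZ, E, Matrix.single, Matrix.of_apply]
  split_ifs <;> norm_num

lemma castK : KZ.map (Int.cast : ℤ → ℝ) = Kr := by
  ext a b
  simp only [KZ, Kr, Matrix.map_apply, Matrix.sub_apply, kroneckerMap_apply,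
    EZ, E, Matrix.single, Matrix.of_apply]
  split_ifs <;> norm_num

lemma place12_map (X : Z4) :
    place12 (X.map (Int.cast : ℤ → ℝ)) = (zp12 X).map (Int.cast : ℤ → ℝ) := by
  ext i j
  simp only [place12, zp12, Matrix.map_apply, Matrix.of_apply]
  split_ifs <;> simp

lemma place13_map (X : Z4) :
    place13 (X.map (Int.cast : ℤ → ℝ)) = (zp13 X).map (Int.cast : ℤ → ℝ) := by
  ext i j
  simp only [place13, zp13, Matrix.map_apply, Matrix.of_apply]
  split_ifs <;> simp

lemma place23_map (X : Z4) :
    place23 (X.map (Int.cast : ℤ → ℝ)) = (zp23 X).map (Int.cast : ℤ → ℝ) := by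
  ext i j
  simp only [place23, zp23, Matrix.map_apply, Matrix.of_apply]
  split_ifs <;> simp

lemma fac1_map (m : Matrix (Fin 2) (Fin 2) ℤ) :
    fac1 (m.map (Int.cast : ℤ → ℝ)) = (zf1 m).map (Int.cast : ℤ → ℝ) := by
  ext i j
  simp only [fac1, zf1, Matrix.map_apply, Matrix.of_apply]
  split_ifs <;> simp

lemma fac2_map (m : Matrix (Fin 2) (Fin 2) ℤ) :
    fac2 (m.map (Int.cast : ℤ → ℝ)) = (zf2 m).map (Int.cast : ℤ → ℝ) := by
  ext i j
  simp only [fac2, zf2, Matrix.map_apply, Matrix.of_apply]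
  split_ifs <;> simp

lemma fac3_map (m : Matrix (Fin 2) (Fin 2) ℤ) :
    fac3 (m.map (Int.cast : ℤ → ℝ)) = (zf3 m).map (Int.cast : ℤ → ℝ) := by
  ext i j
  simp only [fac3, zf3, Matrix.map_apply, Matrix.of_apply]
  split_ifs <;> simp

lemma hD12 : D12 = φ (zp12 DZ) := by rw [phi_apply, ← place12_map, castD]; rfl
lemma hD13 : D13 = φ (zp13 DZ) := by rw [phi_apply, ← place13_map, castD]; rfl
lemma hD23 : D23 = φ (zp23 DZ) := by rw [phi_apply, ← place23_map, castD]; rfl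
lemma hK12 : K12 = φ (zp12 KZ) := by rw [phi_apply, ← place12_map, castK]; rfl
lemma hK13 : K13 = φ (zp13 KZ) := by rw [phi_apply, ← place13_map, castK]; rfl
lemma hK23 : K23 = φ (zp23 KZ) := by rw [phi_apply, ← place23_map, castK]; rfl
lemma hF1 (i : Fin 2) : fac1 (E i i) = φ (zf1 (EZ i i)) := by
  rw [phi_apply, ← fac1_map, castE]
lemma hF2 (i : Fin 2) : fac2 (E i i) = φ (zf2 (EZ i i)) := by
  rw [phi_apply, ← fac2_map, castE]
lemma hF3 (i : Fin 2) : fac3 (E i i) = φ (zf3 (EZ i i)) := by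
  rw [phi_apply, ← fac3_map, castE]

/-! ### The key algebraic identity over ℝ -/

lemma keyG (w : ℝ) :
    (w • D12 + K12) * (w • D13 + K13) - (w • D13 + K13) * (w • D12 + K12)
    + ((w • D12 + K12) * (w • D23 + K23) - (w • D23 + K23) * (w • D12 + K12))
    - ((w • D23 + K23) * (w • D13 + K13) - (w • D13 + K13) * (w • D23 + K23))
    + (fac3 (E 1 1) * (w • D12 + K12) - fac3 (E 0 0) * (w • D12 + K12))
    + (fac1 (E 1 1) * (w • D23 + K23) - fac1 (E 0 0) * (w • D23 + K23))
    + (fac2 (E 0 0) * (w • D13 + K13) - fac2 (E 1 1) * (w • D13 + K13)) = 0 := by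
  have hA : D12 * D13 - D13 * D12 + (D12 * D23 - D23 * D12)
      - (D23 * D13 - D13 * D23) = 0 := by
    rw [hD12, hD13, hD23]
    simp only [← _root_.map_mul, ← _root_.map_sub, ← _root_.map_add]
    rw [ZA_zero, map_zero]
  have hB : D12 * K13 - K13 * D12 + (K12 * D13 - D13 * K12)
      + (D12 * K23 - K23 * D12) + (K12 * D23 - D23 * K12)
      - (D23 * K13 - K13 * D23) - (K23 * D13 - D13 * K23)
      + (fac3 (E 1 1) * D12 - fac3 (E 0 0) * D12)
      + (fac1 (E 1 1) * D23 - fac1 (E 0 0) * D23)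
      + (fac2 (E 0 0) * D13 - fac2 (E 1 1) * D13) = 0 := by
    rw [hD12, hD13, hD23, hK12, hK13, hK23, hF1, hF1, hF2, hF2, hF3, hF3]
    simp only [← _root_.map_mul, ← _root_.map_sub, ← _root_.map_add]
    rw [ZB_zero, map_zero]
  have hC : K12 * K13 - K13 * K12 + (K12 * K23 - K23 * K12)
      - (K23 * K13 - K13 * K23)
      + (fac3 (E 1 1) * K12 - fac3 (E 0 0) * K12)
      + (fac1 (E 1 1) * K23 - fac1 (E 0 0) * K23)
      + (fac2 (E 0 0) * K13 - fac2 (E 1 1) * K13) = 0 := by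
    rw [hK12, hK13, hK23, hF1, hF1, hF2, hF2, hF3, hF3]
    simp only [← _root_.map_mul, ← _root_.map_sub, ← _root_.map_add]
    rw [ZC_zero, map_zero]
  have step :
      (w • D12 + K12) * (w • D13 + K13) - (w • D13 + K13) * (w • D12 + K12)
      + ((w • D12 + K12) * (w • D23 + K23) - (w • D23 + K23) * (w • D12 + K12))
      - ((w • D23 + K23) * (w • D13 + K13) - (w • D13 + K13) * (w • D23 + K23))
      + (fac3 (E 1 1) * (w • D12 + K12) - fac3 (E 0 0) * (w • D12 + K12))
      + (fac1 (E 1 1) * (w • D23 + K23) - fac1 (E 0 0) * (w • D23 + K23))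
      + (fac2 (E 0 0) * (w • D13 + K13) - fac2 (E 1 1) * (w • D13 + K13))
      = (w ^ 2) • (D12 * D13 - D13 * D12 + (D12 * D23 - D23 * D12)
          - (D23 * D13 - D13 * D23))
        + w • (D12 * K13 - K13 * D12 + (K12 * D13 - D13 * K12)
          + (D12 * K23 - K23 * D12) + (K12 * D23 - D23 * K12)
          - (D23 * K13 - K13 * D23) - (K23 * D13 - D13 * K23)
          + (fac3 (E 1 1) * D12 - fac3 (E 0 0) * D12)
          + (fac1 (E 1 1) * D23 - fac1 (E 0 0) * D23)
          + (fac2 (E 0 0) * D13 - fac2 (E 1 1) * D13))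
        + (K12 * K13 - K13 * K12 + (K12 * K23 - K23 * K12)
          - (K23 * K13 - K13 * K23)
          + (fac3 (E 1 1) * K12 - fac3 (E 0 0) * K12)
          + (fac1 (E 1 1) * K23 - fac1 (E 0 0) * K23)
          + (fac2 (E 0 0) * K13 - fac2 (E 1 1) * K13)) := by
    simp only [mul_add, add_mul, Matrix.smul_mul, Matrix.mul_smul, smul_mul_assoc, mul_smul_comm, smul_smul,
      smul_add, smul_sub]
    module
  rw [step, hA, hB, hC]
  simp

/-! ### Closed forms for the `a`-matrices -/

lemma aMat_eq (w t s : ℝ) : aMat w t s = (1 / (2 * (t - s))) • (w • Dr + Kr) := by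
  rw [aMat, Dr, Kr]
  module

lemma place12_add (X Y : M4) : place12 (X + Y) = place12 X + place12 Y := by
  ext i j; simp only [place12, Matrix.add_apply, Matrix.of_apply, add_mul]

lemma place13_add (X Y : M4) : place13 (X + Y) = place13 X + place13 Y := by
  ext i j; simp only [place13, Matrix.add_apply, Matrix.of_apply, add_mul]

lemma place23_add (X Y : M4) : place23 (X + Y) = place23 X + place23 Y := by
  ext i j; simp only [place23, Matrix.add_apply, Matrix.of_apply, add_mul]

lemma place12_smul (c : ℝ) (X : M4) : place12 (c • X) = c • place12 X := by
  ext i j; simp [place12, mul_assoc]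

lemma place13_smul (c : ℝ) (X : M4) : place13 (c • X) = c • place13 X := by
  ext i j; simp [place13, mul_assoc]

lemma place23_smul (c : ℝ) (X : M4) : place23 (c • X) = c • place23 X := by
  ext i j; simp [place23, mul_assoc]

lemma a12_eq (w : ℝ) : a12 w = fun t s => (1 / (2 * (t - s))) • (w • D12 + K12) := by
  funext t s
  show place12 (aMat w t s) = _
  rw [aMat_eq, place12_smul, place12_add, place12_smul]
  exact rfl

lemma a13_eq (w : ℝ) : a13 w = fun t s => (1 / (2 * (t - s))) • (w • D13 + K13) := by
  funext t s
  show place13 (aMat w t s) = _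
  rw [aMat_eq, place13_smul, place13_add, place13_smul]
  exact rfl

lemma a23_eq (w : ℝ) : a23 w = fun t s => (1 / (2 * (t - s))) • (w • D23 + K23) := by
  funext t s
  show place23 (aMat w t s) = _
  rw [aMat_eq, place23_smul, place23_add, place23_smul]
  exact rfl

lemma a32_eq (w : ℝ) : a32 w = fun t s => (1 / (2 * (t - s))) • (-(w • D23 + K23)) := by
  funext t s
  show -(a23 w t s) = _
  rw [a23_eq]
  simp [smul_neg]

lemma a31_eq (w : ℝ) : a31 w = fun t s => (1 / (2 * (t - s))) • (-(w • D13 + K13)) := by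
  funext t s
  show -(a13 w t s) = _
  rw [a13_eq]
  simp [smul_neg]

/-! ### Derivatives -/

lemma hasD1 {q₁ q₂ : ℝ} (h : q₁ ≠ q₂) (k : ℝ) :
    HasDerivAt (fun t => (1 / (2 * (t - q₂))) * k)
      (-(1 / 2 * ((q₁ - q₂)⁻¹) ^ 2) * k) q₁ := by
  have hx : q₁ - q₂ ≠ 0 := sub_ne_zero.mpr h
  have hg : HasDerivAt (fun t : ℝ => 2 * (t - q₂)) 2 q₁ := by
    simpa using ((hasDerivAt_id q₁).sub_const q₂).const_mul (2 : ℝ)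
  have h2 : (2 : ℝ) * (q₁ - q₂) ≠ 0 := mul_ne_zero two_ne_zero hx
  have H := (hg.inv h2).mul_const k
  have H2 : HasDerivAt (fun t => (1 / (2 * (t - q₂))) * k)
      (-2 / ((2 : ℝ) * (q₁ - q₂)) ^ 2 * k) q₁ := by
    simpa [one_div] using H
  have hv : (-(1 / 2 * ((q₁ - q₂)⁻¹) ^ 2) * k : ℝ)
      = -2 / ((2 : ℝ) * (q₁ - q₂)) ^ 2 * k := by
    field_simp
  rw [hv]; exact H2

lemma hasD2 {q₁ q₂ : ℝ} (h : q₁ ≠ q₂) (k : ℝ) :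
    HasDerivAt (fun t => (1 / (2 * (q₁ - t))) * k)
      ((1 / 2 * ((q₁ - q₂)⁻¹) ^ 2) * k) q₂ := by
  have hx : q₁ - q₂ ≠ 0 := sub_ne_zero.mpr h
  have hg : HasDerivAt (fun t : ℝ => 2 * (q₁ - t)) (-2) q₂ := by
    simpa using ((hasDerivAt_id q₂).const_sub q₁).const_mul (2 : ℝ)
  have h2 : (2 : ℝ) * (q₁ - q₂) ≠ 0 := mul_ne_zero two_ne_zero hx
  have H := (hg.inv h2).mul_const k
  have H2 : HasDerivAt (fun t => (1 / (2 * (q₁ - t))) * k)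
      (2 / ((2 : ℝ) * (q₁ - q₂)) ^ 2 * k) q₂ := by
    simpa [one_div] using H
  have hv : ((1 / 2 * ((q₁ - q₂)⁻¹) ^ 2) * k : ℝ)
      = 2 / ((2 : ℝ) * (q₁ - q₂)) ^ 2 * k := by
    field_simp
  rw [hv]; exact H2

lemma pd1_G {q₁ q₂ : ℝ} (h : q₁ ≠ q₂) (G : M8) :
    pd1 (fun t s => (1 / (2 * (t - s))) • G) q₁ q₂
      = (-(1 / 2 * ((q₁ - q₂)⁻¹) ^ 2)) • G := by
  ext i j
  simp only [pd1, Matrix.of_apply, Matrix.smul_apply, smul_eq_mul]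
  exact (hasD1 h (G i j)).deriv

lemma pd2_G {q₁ q₂ : ℝ} (h : q₁ ≠ q₂) (G : M8) :
    pd2 (fun t s => (1 / (2 * (t - s))) • G) q₁ q₂
      = ((1 / 2 * ((q₁ - q₂)⁻¹) ^ 2)) • G := by
  ext i j
  simp only [pd2, Matrix.of_apply, Matrix.smul_apply, smul_eq_mul]
  exact (hasD2 h (G i j)).deriv

end Stmt9Aux
open Stmt9Aux
/-- the classical dynamical Yang–Baxter equation
`[a₁₂,a₁₃] + [a₁₂,a₂₃] + [a₃₂,a₁₃] + ½(h₃∂a₁₂ + h₁∂a₂₃ + h₂∂a₃₁) = 0`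
holds for the explicit `a`-matrix on the domain `q₁ ≠ q₂`. -/
theorem stmt9 (w q₁ q₂ : ℝ) (hq : q₁ ≠ q₂) :
    (a12 w q₁ q₂ * a13 w q₁ q₂ - a13 w q₁ q₂ * a12 w q₁ q₂)
    + (a12 w q₁ q₂ * a23 w q₁ q₂ - a23 w q₁ q₂ * a12 w q₁ q₂)
    + (a32 w q₁ q₂ * a13 w q₁ q₂ - a13 w q₁ q₂ * a32 w q₁ q₂)
    + (1 / 2 : ℝ) • (hd3 (a12 w) q₁ q₂ + hd1 (a23 w) q₁ q₂ + hd2 (a31 w) q₁ q₂)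
    = 0 := by
  rw [a12_eq, a13_eq, a23_eq, a32_eq, a31_eq]
  simp only [hd1, hd2, hd3, pd1_G hq, pd2_G hq]
  rw [show (0 : M8) = ((1 / (2 * (q₁ - q₂))) ^ 2) •
      ((w • D12 + K12) * (w • D13 + K13) - (w • D13 + K13) * (w • D12 + K12)
      + ((w • D12 + K12) * (w • D23 + K23) - (w • D23 + K23) * (w • D12 + K12))
      - ((w • D23 + K23) * (w • D13 + K13) - (w • D13 + K13) * (w • D23 + K23))
      + (fac3 (E 1 1) * (w • D12 + K12) - fac3 (E 0 0) * (w • D12 + K12))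
      + (fac1 (E 1 1) * (w • D23 + K23) - fac1 (E 0 0) * (w • D23 + K23))
      + (fac2 (E 0 0) * (w • D13 + K13) - fac2 (E 1 1) * (w • D13 + K13)))
    from by rw [keyG w, smul_zero]]
  rw [show (1 / (2 * (q₁ - q₂)) : ℝ) = 1 / 2 * (q₁ - q₂)⁻¹ from by
    rw [one_div, mul_inv]; ring]
  simp only [mul_add, add_mul, Matrix.smul_mul, Matrix.mul_smul, smul_mul_assoc, mul_smul_comm, smul_smul, mul_neg, neg_mul, smul_neg,
    neg_neg, smul_add, smul_sub]
  module

end
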